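/- Let G ∈ ℝ₊^{n×n} with spectral radius strictly less than 1/(δ(1+β)), where 0 < δ < 1 and 0 ≤ β < 1, and let A be the 2n×2n block matrix [[Gᵀ, βGᵀ], [βGᵀ, Gᵀ]]. Then I_{2n} − δA is invertible, and the vector formed by the first n entries of (I_{2n} − δA)^{−1} applied to the stacked vector (1_n, 1_n) equals (I_n − δ(1+β)Gᵀ)^{−1} 1_n. -/

import Mathlib

open Matrix

/-- The spectral radius of a real matrix, defined via its complexification. -/
noncomputable def specRad {n : ℕ} (G : Matrix (Fin n) (Fin n) ℝ) : ENNReal :=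
  spectralRadius ℂ (G.map (algebraMap ℝ ℂ))

set_option maxHeartbeats 1000000 in
lemma unit_of_specRad {n : ℕ} (G : Matrix (Fin n) (Fin n) ℝ) {c : ℝ} (hc : 0 < c)
    (h : specRad G < ENNReal.ofReal (1 / c)) :
    IsUnit (1 - c • G) := by
  set M := G.map (algebraMap ℝ ℂ) with hM
  have hcne : (c : ℂ) ≠ 0 := by exact_mod_cast hc.ne'
  have hk : specRad G < (‖((c : ℂ))⁻¹‖₊ : ENNReal) := by
    have : (‖((c : ℂ))⁻¹‖₊ : ENNReal) = ENNReal.ofReal (1 / c) := by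
      rw [nnnorm_inv, ENNReal.coe_inv (by simpa using hcne), one_div,
        ENNReal.ofReal_inv_of_pos hc, Complex.nnnorm_real, ← enorm_eq_nnnorm, Real.enorm_eq_ofReal hc.le]
    rw [this]; exact h
  have hres : IsUnit (algebraMap ℂ (Matrix (Fin n) (Fin n) ℂ) ((c : ℂ))⁻¹ - M) := by
    by_contra hn
    have hmem : ((c : ℂ))⁻¹ ∈ spectrum ℂ M := spectrum.mem_iff.mpr hn
    have hle : (‖((c : ℂ))⁻¹‖₊ : ENNReal) ≤ spectralRadius ℂ M := by
      exact le_iSup₂ (f := fun k (_ : k ∈ spectrum ℂ M) => (‖k‖₊ : ENNReal)) ((c : ℂ))⁻¹ hmem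
    exact absurd hle (not_le.mpr hk)
  have hunit : IsUnit (1 - (c : ℂ) • M) := by
    have h2 : (1 - (c : ℂ) • M) = (Units.mk0 (c : ℂ) hcne) • (algebraMap ℂ (Matrix (Fin n) (Fin n) ℂ) ((c:ℂ)⁻¹) - M) := by
      rw [Algebra.algebraMap_eq_smul_one, Units.smul_def, Units.val_mk0, smul_sub,
        smul_smul, mul_inv_cancel₀ hcne, one_smul]
    rw [h2]
    exact hres.smul _
  have hmap : (1 - (c : ℂ) • M) = ((1 : Matrix (Fin n) (Fin n) ℝ) - c • G).map (algebraMap ℝ ℂ) := by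
    ext i j
    simp only [Matrix.map_apply, Matrix.one_apply, Matrix.sub_apply, Matrix.smul_apply, hM,
      smul_eq_mul, Complex.coe_algebraMap]
    split_ifs <;> push_cast <;> ring
  rw [Matrix.isUnit_iff_isUnit_det, isUnit_iff_ne_zero] at hunit ⊢
  intro hdet
  apply hunit
  rw [hmap, ← RingHom.mapMatrix_apply, ← RingHom.map_det, hdet, map_zero]

set_option maxHeartbeats 1000000 in
/-- the first `n` entries of `(I − δA)⁻¹ (1ₙ, 1ₙ)` for the block
matrix `A = [[Gᵀ, βGᵀ], [βGᵀ, Gᵀ]]` give the Katz–Bonacich centrality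
`κ(G, δ(1+β))`. -/
theorem stmt_6 {n : ℕ} (G : Matrix (Fin n) (Fin n) ℝ) (β δ : ℝ)
    (hG : ∀ i j, 0 ≤ G i j) (hβ0 : 0 ≤ β) (hβ1 : β < 1)
    (hδ0 : 0 < δ) (hδ1 : δ < 1)
    (hspec : specRad G < ENNReal.ofReal (1 / (δ * (1 + β)))) :
    IsUnit (1 - δ • Matrix.fromBlocks Gᵀ (β • Gᵀ) (β • Gᵀ) Gᵀ) ∧
    (fun i : Fin n =>
        ((1 - δ • Matrix.fromBlocks Gᵀ (β • Gᵀ) (β • Gᵀ) Gᵀ)⁻¹ *ᵥ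
          Sum.elim (1 : Fin n → ℝ) (1 : Fin n → ℝ)) (Sum.inl i)) =
      (1 - (δ * (1 + β)) • Gᵀ)⁻¹ *ᵥ (1 : Fin n → ℝ) := by
  have hc : 0 < δ * (1 + β) := by positivity
  have hc' : 0 < δ * (1 - β) := mul_pos hδ0 (by linarith)
  have hle : ENNReal.ofReal (1 / (δ * (1 + β))) ≤ ENNReal.ofReal (1 / (δ * (1 - β))) :=
    ENNReal.ofReal_le_ofReal (one_div_le_one_div_of_le hc' (by nlinarith))
  have u1 : IsUnit (1 - (δ * (1 + β)) • G) := unit_of_specRad G hc hspec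
  have u2 : IsUnit (1 - (δ * (1 - β)) • G) := unit_of_specRad G hc' (lt_of_lt_of_le hspec hle)
  set X : Matrix (Fin n) (Fin n) ℝ := 1 - (δ * (1 + β)) • Gᵀ with hXdef
  set Y : Matrix (Fin n) (Fin n) ℝ := 1 - (δ * (1 - β)) • Gᵀ with hYdef
  have hXT : X = (1 - (δ * (1 + β)) • G)ᵀ := by
    rw [Matrix.transpose_sub, Matrix.transpose_smul, Matrix.transpose_one]
  have hYT : Y = (1 - (δ * (1 - β)) • G)ᵀ := by
    rw [Matrix.transpose_sub, Matrix.transpose_smul, Matrix.transpose_one]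
  have hXdet : IsUnit X.det := by
    rw [hXT, Matrix.det_transpose]; exact (Matrix.isUnit_iff_isUnit_det _).mp u1
  have hYdet : IsUnit Y.det := by
    rw [hYT, Matrix.det_transpose]; exact (Matrix.isUnit_iff_isUnit_det _).mp u2
  set S : Matrix (Fin n) (Fin n) ℝ := 1 - δ • Gᵀ with hSdef
  set T : Matrix (Fin n) (Fin n) ℝ := -((δ * β) • Gᵀ) with hTdef
  have hB : (1 : Matrix (Fin n ⊕ Fin n) (Fin n ⊕ Fin n) ℝ) -
      δ • Matrix.fromBlocks Gᵀ (β • Gᵀ) (β • Gᵀ) Gᵀ = Matrix.fromBlocks S T T S := by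
    rw [← Matrix.fromBlocks_one, Matrix.fromBlocks_smul, sub_eq_add_neg,
      Matrix.fromBlocks_neg, Matrix.fromBlocks_add]
    simp [hSdef, hTdef, smul_smul, sub_eq_add_neg]
  set P : Matrix (Fin n) (Fin n) ℝ := (2⁻¹ : ℝ) • (X⁻¹ + Y⁻¹) with hPdef
  set Q : Matrix (Fin n) (Fin n) ℝ := (2⁻¹ : ℝ) • (X⁻¹ - Y⁻¹) with hQdef
  have hST : S + T = X := by rw [hSdef, hTdef, hXdef]; module
  have hST' : S - T = Y := by rw [hSdef, hTdef, hYdef]; module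
  have e1 : S * X⁻¹ + T * X⁻¹ = 1 := by
    rw [← add_mul, hST]; exact Matrix.mul_nonsing_inv _ hXdet
  have e2 : S * Y⁻¹ - T * Y⁻¹ = 1 := by
    rw [← sub_mul, hST']; exact Matrix.mul_nonsing_inv _ hYdet
  have h11 : S * P + T * Q = 1 := by
    have : S * P + T * Q =
        (2⁻¹ : ℝ) • ((S * X⁻¹ + T * X⁻¹) + (S * Y⁻¹ - T * Y⁻¹)) := by
      rw [hPdef, hQdef]
      simp only [Matrix.mul_smul, Matrix.mul_add, Matrix.mul_sub]
      module
    rw [this, e1, e2]; module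
  have h12 : S * Q + T * P = 0 := by
    have : S * Q + T * P =
        (2⁻¹ : ℝ) • ((S * X⁻¹ + T * X⁻¹) - (S * Y⁻¹ - T * Y⁻¹)) := by
      rw [hPdef, hQdef]
      simp only [Matrix.mul_smul, Matrix.mul_add, Matrix.mul_sub]
      module
    rw [this, e1, e2]; module
  have h21 : T * P + S * Q = 0 := by rw [add_comm]; exact h12
  have h22 : T * Q + S * P = 1 := by rw [add_comm]; exact h11
  have hmul : Matrix.fromBlocks S T T S * Matrix.fromBlocks P Q Q P = 1 := by
    rw [Matrix.fromBlocks_multiply, h11, h12, h21, h22, Matrix.fromBlocks_one]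
  have hBunit : IsUnit (1 - δ • Matrix.fromBlocks Gᵀ (β • Gᵀ) (β • Gᵀ) Gᵀ) := by
    rw [hB, Matrix.isUnit_iff_isUnit_det]
    exact Matrix.isUnit_det_of_right_inverse hmul
  refine ⟨hBunit, ?_⟩
  have hinv : (1 - δ • Matrix.fromBlocks Gᵀ (β • Gᵀ) (β • Gᵀ) Gᵀ)⁻¹ =
      Matrix.fromBlocks P Q Q P := by
    rw [hB]; exact Matrix.inv_eq_right_inv hmul
  funext i
  rw [hinv, Matrix.fromBlocks_mulVec]
  simp only [Sum.elim_inl, Sum.elim_comp_inl, Sum.elim_comp_inr]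
  have hPQ : P + Q = X⁻¹ := by rw [hPdef, hQdef]; module
  rw [← Matrix.add_mulVec, hPQ, hXdef]
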